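/- Let s ∈ (0,1), α ∈ (0,1), c > 0, and set d_ε := ((1+s)/(c α ε))^{1/(1+s−α)}. For d > 1/2 and ε > 0 define f(d) := (2/s)[ 2 d^{−s} − (d − 1/2)^{−s} − (d + 1/2)^{−s} ] + (c ε/(1−α))[ 2 d^{1−α} − (d − 1/2)^{1−α} − (d + 1/2)^{1−α} ]. Then there exists ε̄ = ε̄(s, α, c) > 0 such that for every ε ∈ (0, ε̄) there exists d > d_ε with f(d) = 0. Consequently, for such d, the set E := (0,1/2) ∪ (d, d+1/2) satisfies κ_E(x) + c ε V_E(x) = λ for all four points x ∈ ∂E = {0, 1/2, d, d+1/2} and some λ ∈ ℝ. -/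

import Mathlib

open MeasureTheory Set Filter Metric Topology

noncomputable section

/-- The set `E = (0,1/2) ∪ (d, d+1/2) ⊆ ℝ`. -/
def Eset (d : ℝ) : Set ℝ := Ioo 0 (1 / 2) ∪ Ioo d (d + 1 / 2)

/-- The Riesz potential `V_E(x) = ∫_E |x-y|^{-α} dy` of a set `E ⊆ ℝ`. -/
def rieszPot1 (α : ℝ) (E : Set ℝ) (x : ℝ) : ℝ :=
  ∫ y in E, |x - y| ^ (-α)

/-- `IsFracMeanCurv1 s E x κ` says that the principal value
`κ_E(x) = p.v. ∫ (χ_{ℝ∖E}(y) - χ_E(y)) |x-y|^{-(1+s)} dy` exists and equals `κ`. -/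
def IsFracMeanCurv1 (s : ℝ) (E : Set ℝ) (x κ : ℝ) : Prop :=
  Tendsto (fun δ : ℝ => ∫ y in {y : ℝ | δ < |x - y|},
      (Eᶜ.indicator (fun _ => (1 : ℝ)) y - E.indicator (fun _ => (1 : ℝ)) y)
        * |x - y| ^ (-(1 + s)))
    (𝓝[>] (0 : ℝ)) (𝓝 κ)

/-- The function `f(d) = ζ_E(1/2) - ζ_E(0)` computed explicitly for
`E = (0,1/2) ∪ (d,d+1/2)`. -/
def fEL (s α c ε d : ℝ) : ℝ :=
  (2 / s) * (2 * d ^ (-s) - (d - 1 / 2) ^ (-s) - (d + 1 / 2) ^ (-s))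
    + (c * ε / (1 - α)) *
        (2 * d ^ (1 - α) - (d - 1 / 2) ^ (1 - α) - (d + 1 / 2) ^ (1 - α))

namespace S16

open intervalIntegral

lemma measEmb_sub (c : ℝ) : MeasurableEmbedding (fun y : ℝ => y - c) :=
  (Homeomorph.subRight c).measurableEmbedding

lemma map_sub_vol (c : ℝ) : Measure.map (fun y : ℝ => y - c) volume = volume := by
  simp_rw [sub_eq_add_neg]
  exact map_add_right_eq_self volume (-c)

lemma integral_comp_sub (g : ℝ → ℝ) (c : ℝ) (S : Set ℝ) :
    ∫ y in (fun y : ℝ => y - c) ⁻¹' S, g (y - c) = ∫ y in S, g y := by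
  have A := measEmb_sub c
  have h := A.setIntegral_map (μ := volume) g S
  rw [map_sub_vol] at h
  exact h.symm

lemma integrableOn_comp_sub {g : ℝ → ℝ} {S : Set ℝ} (c : ℝ) (h : IntegrableOn g S) :
    IntegrableOn (fun y => g (y - c)) ((fun y : ℝ => y - c) ⁻¹' S) := by
  have A := measEmb_sub c
  have h2 : IntegrableOn g S (Measure.map (fun y : ℝ => y - c) volume) := by
    rwa [map_sub_vol]
  exact (A.integrableOn_map_iff).mp h2

lemma measEmb_neg : MeasurableEmbedding (fun y : ℝ => -y) :=
  (Homeomorph.neg ℝ).measurableEmbedding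

lemma integral_comp_neg' (g : ℝ → ℝ) (S : Set ℝ) :
    ∫ y in (fun y : ℝ => -y) ⁻¹' S, g (-y) = ∫ y in S, g y := by
  have h := measEmb_neg.setIntegral_map (μ := volume) g S
  rw [Measure.map_neg_eq_self] at h
  exact h.symm

lemma integrableOn_comp_neg {g : ℝ → ℝ} {S : Set ℝ} (h : IntegrableOn g S) :
    IntegrableOn (fun y => g (-y)) ((fun y : ℝ => -y) ⁻¹' S) := by
  have h2 : IntegrableOn g S (Measure.map (fun y : ℝ => -y) volume) := by
    rwa [Measure.map_neg_eq_self]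
  exact (measEmb_neg.integrableOn_map_iff).mp h2

lemma integrableOn_rpow_Ioo {q A B : ℝ} (h : -1 < q ∨ 0 < A) (hAB : A ≤ B) :
    IntegrableOn (fun u : ℝ => u ^ q) (Ioo A B) := by
  have : IntervalIntegrable (fun u : ℝ => u ^ q) volume A B := by
    rcases h with h | h
    · exact intervalIntegrable_rpow' h
    · refine intervalIntegrable_rpow (Or.inr ?_)
      rw [uIcc_of_le hAB]
      rintro ⟨h0, -⟩; linarith
  exact (intervalIntegrable_iff_integrableOn_Ioo_of_le hAB).mp this

lemma integral_rpow_Ioo {q A B : ℝ} (h : -1 < q ∨ (q ≠ -1 ∧ 0 < A)) (hAB : A ≤ B) :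
    ∫ u in Ioo A B, u ^ q = (B ^ (q + 1) - A ^ (q + 1)) / (q + 1) := by
  rw [setIntegral_congr_set Ioo_ae_eq_Ioc, ← intervalIntegral.integral_of_le hAB,
    integral_rpow]
  rcases h with h | ⟨h1, h2⟩
  · exact Or.inl h
  · refine Or.inr ⟨h1, ?_⟩
    rw [uIcc_of_le hAB]
    rintro ⟨h0, -⟩; linarith

-- preimage identities
lemma pre_sub_Ioo (c A B : ℝ) : (fun y : ℝ => y - c) ⁻¹' (Ioo A B) = Ioo (A + c) (B + c) := by
  ext y; simp [mem_Ioo, lt_sub_iff_add_lt, sub_lt_iff_lt_add]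

lemma pre_sub_Ioi (c A : ℝ) : (fun y : ℝ => y - c) ⁻¹' (Ioi A) = Ioi (A + c) := by
  ext y; simp [mem_Ioi, lt_sub_iff_add_lt]

lemma pre_neg_Ioo (A B : ℝ) : (fun y : ℝ => -y) ⁻¹' (Ioo A B) = Ioo (-B) (-A) := by
  ext y; simp [mem_Ioo, and_comm]

lemma pre_neg_Ioi (A : ℝ) : (fun y : ℝ => -y) ⁻¹' (Ioi A) = Iio (-A) := by
  ext y; simp [mem_Ioi]

-- abs rewrites
lemma abs_eq_right {x y : ℝ} (h : x ≤ y) : |x - y| = y - x := by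
  rw [abs_sub_comm]; exact abs_of_nonneg (by linarith)

lemma abs_eq_left {x y : ℝ} (h : y ≤ x) : |x - y| = x - y := abs_of_nonneg (by linarith)

/-- integral over `Ioo a b` to the right of `x`. -/
lemma integral_Ioo_right {p x a b : ℝ} (hab : a ≤ b) (hxa : x ≤ a) (hp : p ≠ 1)
    (h : -1 < -p ∨ x < a) :
    ∫ y in Ioo a b, |x - y| ^ (-p) = ((b - x) ^ (1 - p) - (a - x) ^ (1 - p)) / (1 - p) := by
  have h1 : ∫ y in Ioo a b, |x - y| ^ (-p) = ∫ y in Ioo a b, (y - x) ^ (-p) := by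
    refine setIntegral_congr_fun measurableSet_Ioo (fun y hy => ?_)
    rw [abs_eq_right (le_of_lt (lt_of_le_of_lt hxa hy.1))]
  rw [h1]
  have h2 := integral_comp_sub (fun u : ℝ => u ^ (-p)) x (Ioo (a - x) (b - x))
  rw [pre_sub_Ioo, sub_add_cancel, sub_add_cancel] at h2
  rw [h2, integral_rpow_Ioo ?_ (by linarith)]
  · have e : -p + 1 = 1 - p := by ring
    rw [e]
  · rcases h with h | h
    · exact Or.inl h
    · exact Or.inr ⟨by intro hq; apply hp; linarith, by linarith⟩

lemma integrableOn_Ioo_right {p x a b : ℝ} (hab : a ≤ b) (hxa : x ≤ a)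
    (h : -1 < -p ∨ x < a) :
    IntegrableOn (fun y => |x - y| ^ (-p)) (Ioo a b) := by
  have h1 : IntegrableOn (fun u : ℝ => u ^ (-p)) (Ioo (a - x) (b - x)) :=
    integrableOn_rpow_Ioo (by rcases h with h | h; exacts [Or.inl h, Or.inr (by linarith)])
      (by linarith)
  have h2 := integrableOn_comp_sub x h1
  rw [pre_sub_Ioo, sub_add_cancel, sub_add_cancel] at h2
  refine h2.congr_fun (fun y hy => ?_) measurableSet_Ioo
  rw [abs_eq_right (le_of_lt (lt_of_le_of_lt hxa hy.1))]

/-- reduce left of x to right of -x -/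
lemma integral_Ioo_left {p x a b : ℝ} (hab : a ≤ b) (hbx : b ≤ x) (hp : p ≠ 1)
    (h : -1 < -p ∨ b < x) :
    ∫ y in Ioo a b, |x - y| ^ (-p) = ((x - a) ^ (1 - p) - (x - b) ^ (1 - p)) / (1 - p) := by
  have key := integral_comp_neg' (fun z => |(-x) - z| ^ (-p)) (Ioo (-b) (-a))
  rw [pre_neg_Ioo, neg_neg, neg_neg] at key
  have e1 : ∀ y : ℝ, |(-x) - (-y)| ^ (-p) = |x - y| ^ (-p) := by
    intro y; rw [show (-x) - (-y) = -(x - y) by ring, abs_neg]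
  simp_rw [e1] at key
  rw [key, integral_Ioo_right (by linarith) (by linarith) hp
    (by rcases h with h | h; exacts [Or.inl h, Or.inr (by linarith)])]
  have e2 : -a - -x = x - a := by ring
  have e3 : -b - -x = x - b := by ring
  rw [e2, e3]

lemma integrableOn_Ioo_left {p x a b : ℝ} (hab : a ≤ b) (hbx : b ≤ x)
    (h : -1 < -p ∨ b < x) :
    IntegrableOn (fun y => |x - y| ^ (-p)) (Ioo a b) := by
  have h1 : IntegrableOn (fun z => |(-x) - z| ^ (-p)) (Ioo (-b) (-a)) :=
    integrableOn_Ioo_right (by linarith) (by linarith)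
      (by rcases h with h | h; exacts [Or.inl h, Or.inr (by linarith)])
  have h2 := integrableOn_comp_neg h1
  rw [pre_neg_Ioo, neg_neg, neg_neg] at h2
  refine h2.congr_fun (fun y hy => ?_) measurableSet_Ioo
  dsimp only; rw [show (-x) - (-y) = -(x - y) by ring, abs_neg]

lemma integral_tail_Ioi {p x a : ℝ} (hp : 1 < p) (hxa : x < a) :
    ∫ y in Ioi a, |x - y| ^ (-p) = (a - x) ^ (1 - p) / (p - 1) := by
  have h1 : ∫ y in Ioi a, |x - y| ^ (-p) = ∫ y in Ioi a, (y - x) ^ (-p) := by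
    refine setIntegral_congr_fun measurableSet_Ioi (fun y hy => ?_)
    rw [abs_eq_right (le_of_lt (lt_trans hxa hy))]
  rw [h1]
  have h2 := integral_comp_sub (fun u : ℝ => u ^ (-p)) x (Ioi (a - x))
  rw [pre_sub_Ioi, sub_add_cancel] at h2
  rw [h2, integral_Ioi_rpow_of_lt (by linarith) (by linarith)]
  rw [div_eq_div_iff (by linarith) (by linarith)]
  have e : -p + 1 = 1 - p := by ring
  rw [e]; ring

lemma integrableOn_tail_Ioi {p x a : ℝ} (hp : 1 < p) (hxa : x < a) :
    IntegrableOn (fun y => |x - y| ^ (-p)) (Ioi a) := by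
  have h1 : IntegrableOn (fun u : ℝ => u ^ (-p)) (Ioi (a - x)) :=
    integrableOn_Ioi_rpow_of_lt (by linarith) (by linarith)
  have h2 := integrableOn_comp_sub x h1
  rw [pre_sub_Ioi, sub_add_cancel] at h2
  refine h2.congr_fun (fun y hy => ?_) measurableSet_Ioi
  rw [abs_eq_right (le_of_lt (lt_trans hxa hy))]

lemma integral_tail_Iio {p x b : ℝ} (hp : 1 < p) (hbx : b < x) :
    ∫ y in Iio b, |x - y| ^ (-p) = (x - b) ^ (1 - p) / (p - 1) := by
  have key := integral_comp_neg' (fun z => |(-x) - z| ^ (-p)) (Ioi (-b))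
  rw [pre_neg_Ioi, neg_neg] at key
  have e1 : ∀ y : ℝ, |(-x) - (-y)| ^ (-p) = |x - y| ^ (-p) := by
    intro y; rw [show (-x) - (-y) = -(x - y) by ring, abs_neg]
  simp_rw [e1] at key
  rw [key, integral_tail_Ioi hp (by linarith), show (-b) - (-x) = x - b by ring]

lemma integrableOn_tail_Iio {p x b : ℝ} (hp : 1 < p) (hbx : b < x) :
    IntegrableOn (fun y => |x - y| ^ (-p)) (Iio b) := by
  have h1 : IntegrableOn (fun z => |(-x) - z| ^ (-p)) (Ioi (-b)) :=
    integrableOn_tail_Ioi hp (by linarith)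
  have h2 := integrableOn_comp_neg h1
  rw [pre_neg_Ioi, neg_neg] at h2
  refine h2.congr_fun (fun y hy => ?_) measurableSet_Iio
  dsimp only; rw [show (-x) - (-y) = -(x - y) by ring, abs_neg]

lemma ball_compl (x δ : ℝ) : {y : ℝ | δ < |x - y|} = Iio (x - δ) ∪ Ioi (x + δ) := by
  ext y
  simp only [mem_setOf_eq, mem_union, mem_Iio, mem_Ioi, lt_abs]
  constructor
  · rintro (h | h)
    · left; linarith
    · right; linarith
  · rintro (h | h)
    · left; linarith
    · right; linarith

lemma integrableOn_w_S {p x δ : ℝ} (hp : 1 < p) (hδ : 0 < δ) :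
    IntegrableOn (fun y => |x - y| ^ (-p)) {y : ℝ | δ < |x - y|} := by
  rw [ball_compl]
  exact (integrableOn_tail_Iio hp (by linarith)).union (integrableOn_tail_Ioi hp (by linarith))

lemma integral_w_S {p x δ : ℝ} (hp : 1 < p) (hδ : 0 < δ) :
    ∫ y in {y : ℝ | δ < |x - y|}, |x - y| ^ (-p) = 2 * δ ^ (1 - p) / (p - 1) := by
  rw [ball_compl, setIntegral_union ?_ measurableSet_Ioi
    (integrableOn_tail_Iio hp (by linarith)) (integrableOn_tail_Ioi hp (by linarith)),
    integral_tail_Iio hp (by linarith), integral_tail_Ioi hp (by linarith),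
    show x - (x - δ) = δ by ring, show x + δ - x = δ by ring]
  · ring
  · rw [disjoint_left]
    intro y hy1 hy2
    simp only [mem_Iio, mem_Ioi] at hy1 hy2
    linarith

/-- Reduce the PV integrand to `∫ w - 2 ∫_{S∩E} w`. -/
lemma pv_step {s x δ : ℝ} (hs : 0 < s) (hδ : 0 < δ) {E : Set ℝ} (hE : MeasurableSet E) :
    (∫ y in {y : ℝ | δ < |x - y|},
        (Eᶜ.indicator (fun _ => (1 : ℝ)) y - E.indicator (fun _ => (1 : ℝ)) y)
          * |x - y| ^ (-(1 + s)))
      = 2 * δ ^ (-s) / s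
        - 2 * ∫ y in {y : ℝ | δ < |x - y|} ∩ E, |x - y| ^ (-(1 + s)) := by
  set S := {y : ℝ | δ < |x - y|} with hSdef
  set w : ℝ → ℝ := fun y => |x - y| ^ (-(1 + s)) with hw
  have hp : (1 : ℝ) < 1 + s := by linarith
  have hwS : IntegrableOn w S := integrableOn_w_S hp hδ
  have hwi : IntegrableOn (E.indicator w) S := hwS.indicator hE
  have hpt : ∀ y : ℝ,
      (Eᶜ.indicator (fun _ => (1 : ℝ)) y - E.indicator (fun _ => (1 : ℝ)) y) * w y
        = w y - 2 * E.indicator w y := by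
    intro y
    by_cases hy : y ∈ E
    · simp [indicator_of_mem hy, indicator_of_notMem (by simpa using hy : y ∉ Eᶜ)]
      ring
    · simp [indicator_of_notMem hy, indicator_of_mem (by simpa using hy : y ∈ Eᶜ)]
  calc ∫ y in S, (Eᶜ.indicator (fun _ => (1 : ℝ)) y - E.indicator (fun _ => (1 : ℝ)) y) * w y
      = ∫ y in S, (w y - 2 * E.indicator w y) := by simp_rw [hpt]
    _ = (∫ y in S, w y) - 2 * ∫ y in S, E.indicator w y := by
        rw [integral_sub hwS (hwi.const_mul 2), MeasureTheory.integral_const_mul]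
    _ = 2 * δ ^ (-s) / s - 2 * ∫ y in S ∩ E, w y := by
        rw [setIntegral_indicator hE, integral_w_S hp hδ,
          show (1 : ℝ) - (1 + s) = -s by ring, show (1 : ℝ) + s - 1 = s by ring]

lemma tendsto_of_eventually_const {F : ℝ → ℝ} {κ r : ℝ} (hr : 0 < r)
    (h : ∀ δ ∈ Ioo (0 : ℝ) r, F δ = κ) :
    Tendsto F (nhdsWithin 0 (Ioi 0)) (nhds κ) := by
  refine Tendsto.congr' ?_ tendsto_const_nhds
  filter_upwards [Ioo_mem_nhdsGT_of_mem (by constructor <;> [exact le_refl 0; exact hr] : (0:ℝ) ∈ Ico 0 r)] with δ hδ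
  exact (h δ hδ).symm

lemma disj_Ioo {a b c e : ℝ} (h : b ≤ c) : Disjoint (Ioo a b) (Ioo c e) := by
  rw [disjoint_left]
  intro y hy1 hy2
  rw [mem_Ioo] at hy1 hy2
  linarith [hy1.2, hy2.1]

lemma measE (d : ℝ) : MeasurableSet (Eset d) := measurableSet_Ioo.union measurableSet_Ioo

lemma curv0 {s d : ℝ} (hs : 0 < s) (hd : 1/2 < d) :
    IsFracMeanCurv1 s (Eset d) 0
      ((2 / s) * ((1/2 : ℝ) ^ (-s) + (d + 1/2) ^ (-s) - d ^ (-s))) := by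
  apply tendsto_of_eventually_const (r := 1/2) (by norm_num)
  rintro δ ⟨hδ0, hδ1⟩
  rw [pv_step hs hδ0 (measE d)]
  have hp : (1:ℝ) + s ≠ 1 := by linarith
  have hsplit : {y : ℝ | δ < |(0:ℝ) - y|} ∩ Eset d = Ioo δ (1/2) ∪ Ioo d (d + 1/2) := by
    rw [ball_compl]
    ext y
    simp only [Eset, mem_inter_iff, mem_union, mem_Iio, mem_Ioi, mem_Ioo, zero_sub, zero_add]
    constructor
    · rintro ⟨h1 | h1, ⟨h2, h3⟩ | ⟨h2, h3⟩⟩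
      · linarith
      · linarith
      · exact Or.inl ⟨h1, h3⟩
      · exact Or.inr ⟨h2, h3⟩
    · rintro (⟨h1, h2⟩ | ⟨h1, h2⟩)
      · exact ⟨Or.inr h1, Or.inl ⟨by linarith, h2⟩⟩
      · exact ⟨Or.inr (by linarith), Or.inr ⟨h1, h2⟩⟩
  rw [hsplit, setIntegral_union (disj_Ioo (by linarith)) measurableSet_Ioo
      (integrableOn_Ioo_right (by linarith) hδ0.le (Or.inr hδ0))
      (integrableOn_Ioo_right (by linarith) (by linarith) (Or.inr (by linarith))),
    integral_Ioo_right (by linarith) hδ0.le hp (Or.inr hδ0),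
    integral_Ioo_right (by linarith) (by linarith) hp (Or.inr (by linarith)),
    show (1:ℝ) - (1 + s) = -s by ring]
  simp only [sub_zero]
  have hs' : s ≠ 0 := hs.ne'
  simp only [div_neg]
  field_simp
  ring

lemma curv_half {s d : ℝ} (hs : 0 < s) (hd : 1/2 < d) :
    IsFracMeanCurv1 s (Eset d) (1/2)
      ((2 / s) * ((1/2 : ℝ) ^ (-s) + d ^ (-s) - (d - 1/2) ^ (-s))) := by
  apply tendsto_of_eventually_const (r := min (1/2) (d - 1/2)) (lt_min (by norm_num) (by linarith))
  rintro δ ⟨hδ0, hδr⟩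
  have hδ1 : δ < 1/2 := lt_of_lt_of_le hδr (min_le_left _ _)
  have hδ2 : δ < d - 1/2 := lt_of_lt_of_le hδr (min_le_right _ _)
  rw [pv_step hs hδ0 (measE d)]
  have hp : (1:ℝ) + s ≠ 1 := by linarith
  have hsplit : {y : ℝ | δ < |(1/2:ℝ) - y|} ∩ Eset d
      = Ioo 0 (1/2 - δ) ∪ Ioo d (d + 1/2) := by
    rw [ball_compl]
    ext y
    simp only [Eset, mem_inter_iff, mem_union, mem_Iio, mem_Ioi, mem_Ioo]
    constructor
    · rintro ⟨h1 | h1, ⟨h2, h3⟩ | ⟨h2, h3⟩⟩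
      · exact Or.inl ⟨h2, h1⟩
      · linarith
      · linarith
      · exact Or.inr ⟨h2, h3⟩
    · rintro (⟨h1, h2⟩ | ⟨h1, h2⟩)
      · exact ⟨Or.inl h2, Or.inl ⟨h1, by linarith⟩⟩
      · exact ⟨Or.inr (by linarith), Or.inr ⟨h1, h2⟩⟩
  rw [hsplit, setIntegral_union (disj_Ioo (by linarith)) measurableSet_Ioo
      (integrableOn_Ioo_left (by linarith) (by linarith) (Or.inr (by linarith)))
      (integrableOn_Ioo_right (by linarith) (by linarith) (Or.inr (by linarith))),
    integral_Ioo_left (by linarith) (by linarith) hp (Or.inr (by linarith)),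
    integral_Ioo_right (by linarith) (by linarith) hp (Or.inr (by linarith)),
    show (1:ℝ) - (1 + s) = -s by ring,
    show (1:ℝ)/2 - 0 = 1/2 by ring, show (1:ℝ)/2 - (1/2 - δ) = δ by ring,
    show d + 1/2 - 1/2 = d by ring]
  have hs' : s ≠ 0 := hs.ne'
  simp only [div_neg]
  field_simp
  ring

lemma curv_d {s d : ℝ} (hs : 0 < s) (hd : 1/2 < d) :
    IsFracMeanCurv1 s (Eset d) d
      ((2 / s) * ((1/2 : ℝ) ^ (-s) + d ^ (-s) - (d - 1/2) ^ (-s))) := by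
  apply tendsto_of_eventually_const (r := min (1/2) (d - 1/2)) (lt_min (by norm_num) (by linarith))
  rintro δ ⟨hδ0, hδr⟩
  have hδ1 : δ < 1/2 := lt_of_lt_of_le hδr (min_le_left _ _)
  have hδ2 : δ < d - 1/2 := lt_of_lt_of_le hδr (min_le_right _ _)
  rw [pv_step hs hδ0 (measE d)]
  have hp : (1:ℝ) + s ≠ 1 := by linarith
  have hsplit : {y : ℝ | δ < |d - y|} ∩ Eset d
      = Ioo 0 (1/2) ∪ Ioo (d + δ) (d + 1/2) := by
    rw [ball_compl]
    ext y
    simp only [Eset, mem_inter_iff, mem_union, mem_Iio, mem_Ioi, mem_Ioo]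
    constructor
    · rintro ⟨h1 | h1, ⟨h2, h3⟩ | ⟨h2, h3⟩⟩
      · exact Or.inl ⟨h2, h3⟩
      · linarith
      · linarith
      · exact Or.inr ⟨h1, h3⟩
    · rintro (⟨h1, h2⟩ | ⟨h1, h2⟩)
      · exact ⟨Or.inl (by linarith), Or.inl ⟨h1, h2⟩⟩
      · exact ⟨Or.inr h1, Or.inr ⟨by linarith, h2⟩⟩
  rw [hsplit, setIntegral_union (disj_Ioo (by linarith)) measurableSet_Ioo
      (integrableOn_Ioo_left (by linarith) (by linarith) (Or.inr (by linarith)))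
      (integrableOn_Ioo_right (by linarith) (by linarith) (Or.inr (by linarith))),
    integral_Ioo_left (by linarith) (by linarith) hp (Or.inr (by linarith)),
    integral_Ioo_right (by linarith) (by linarith) hp (Or.inr (by linarith)),
    show (1:ℝ) - (1 + s) = -s by ring,
    show d - 0 = d by ring, show d + 1/2 - d = 1/2 by ring,
    show d + δ - d = δ by ring]
  have hs' : s ≠ 0 := hs.ne'
  simp only [div_neg]
  field_simp
  ring

lemma curv_top {s d : ℝ} (hs : 0 < s) (hd : 1/2 < d) :
    IsFracMeanCurv1 s (Eset d) (d + 1/2)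
      ((2 / s) * ((1/2 : ℝ) ^ (-s) + (d + 1/2) ^ (-s) - d ^ (-s))) := by
  apply tendsto_of_eventually_const (r := min (1/2) (d - 1/2)) (lt_min (by norm_num) (by linarith))
  rintro δ ⟨hδ0, hδr⟩
  have hδ1 : δ < 1/2 := lt_of_lt_of_le hδr (min_le_left _ _)
  have hδ2 : δ < d - 1/2 := lt_of_lt_of_le hδr (min_le_right _ _)
  rw [pv_step hs hδ0 (measE d)]
  have hp : (1:ℝ) + s ≠ 1 := by linarith
  have hsplit : {y : ℝ | δ < |d + 1/2 - y|} ∩ Eset d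
      = Ioo 0 (1/2) ∪ Ioo d (d + 1/2 - δ) := by
    rw [ball_compl]
    ext y
    simp only [Eset, mem_inter_iff, mem_union, mem_Iio, mem_Ioi, mem_Ioo]
    constructor
    · rintro ⟨h1 | h1, ⟨h2, h3⟩ | ⟨h2, h3⟩⟩
      · exact Or.inl ⟨h2, h3⟩
      · exact Or.inr ⟨h2, h1⟩
      · linarith
      · linarith
    · rintro (⟨h1, h2⟩ | ⟨h1, h2⟩)
      · exact ⟨Or.inl (by linarith), Or.inl ⟨h1, h2⟩⟩
      · exact ⟨Or.inl h2, Or.inr ⟨h1, by linarith⟩⟩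
  rw [hsplit, setIntegral_union (disj_Ioo (by linarith)) measurableSet_Ioo
      (integrableOn_Ioo_left (by linarith) (by linarith) (Or.inr (by linarith)))
      (integrableOn_Ioo_left (by linarith) (by linarith) (Or.inr (by linarith))),
    integral_Ioo_left (by linarith) (by linarith) hp (Or.inr (by linarith)),
    integral_Ioo_left (by linarith) (by linarith) hp (Or.inr (by linarith)),
    show (1:ℝ) - (1 + s) = -s by ring,
    show d + 1/2 - 0 = d + 1/2 by ring, show d + 1/2 - 1/2 = d by ring,
    show d + 1/2 - d = 1/2 by ring, show d + 1/2 - (d + 1/2 - δ) = δ by ring]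
  have hs' : s ≠ 0 := hs.ne'
  simp only [div_neg]
  field_simp
  ring

-- Riesz potentials
lemma riesz_split {α d : ℝ} (hα : 0 < α) (hα1 : α < 1) (hd : 1/2 < d) (x : ℝ)
    (h1 : IntegrableOn (fun y => |x - y| ^ (-α)) (Ioo 0 (1/2)))
    (h2 : IntegrableOn (fun y => |x - y| ^ (-α)) (Ioo d (d + 1/2))) :
    rieszPot1 α (Eset d) x
      = (∫ y in Ioo 0 (1/2), |x - y| ^ (-α)) + ∫ y in Ioo d (d + 1/2), |x - y| ^ (-α) := by
  unfold rieszPot1 Eset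
  rw [show (1:ℝ)/2 = 1/2 by norm_num]
  exact setIntegral_union (disj_Ioo (by linarith)) measurableSet_Ioo h1 h2

lemma riesz0 {α d : ℝ} (hα : 0 < α) (hα1 : α < 1) (hd : 1/2 < d) :
    rieszPot1 α (Eset d) 0
      = ((1/2 : ℝ) ^ (1 - α) + (d + 1/2) ^ (1 - α) - d ^ (1 - α)) / (1 - α) := by
  rw [riesz_split hα hα1 hd 0
      (integrableOn_Ioo_right (by linarith) le_rfl (Or.inl (by linarith)))
      (integrableOn_Ioo_right (by linarith) (by linarith) (Or.inl (by linarith))),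
    integral_Ioo_right (by linarith) le_rfl (by linarith) (Or.inl (by linarith)),
    integral_Ioo_right (by linarith) (by linarith) (by linarith) (Or.inl (by linarith))]
  simp only [sub_zero]
  rw [Real.zero_rpow (by linarith : (1:ℝ) - α ≠ 0)]
  ring

lemma riesz_half {α d : ℝ} (hα : 0 < α) (hα1 : α < 1) (hd : 1/2 < d) :
    rieszPot1 α (Eset d) (1/2)
      = ((1/2 : ℝ) ^ (1 - α) + d ^ (1 - α) - (d - 1/2) ^ (1 - α)) / (1 - α) := by
  rw [riesz_split hα hα1 hd (1/2)
      (integrableOn_Ioo_left (by linarith) le_rfl (Or.inl (by linarith)))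
      (integrableOn_Ioo_right (by linarith) (by linarith) (Or.inl (by linarith))),
    integral_Ioo_left (by linarith) le_rfl (by linarith) (Or.inl (by linarith)),
    integral_Ioo_right (by linarith) (by linarith) (by linarith) (Or.inl (by linarith)),
    show (1:ℝ)/2 - 0 = 1/2 by ring, show (1:ℝ)/2 - 1/2 = 0 by ring,
    show d + 1/2 - 1/2 = d by ring]
  rw [Real.zero_rpow (by linarith : (1:ℝ) - α ≠ 0)]
  ring

lemma riesz_d {α d : ℝ} (hα : 0 < α) (hα1 : α < 1) (hd : 1/2 < d) :
    rieszPot1 α (Eset d) d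
      = ((1/2 : ℝ) ^ (1 - α) + d ^ (1 - α) - (d - 1/2) ^ (1 - α)) / (1 - α) := by
  rw [riesz_split hα hα1 hd d
      (integrableOn_Ioo_left (by linarith) (by linarith) (Or.inl (by linarith)))
      (integrableOn_Ioo_right (by linarith) le_rfl (Or.inl (by linarith))),
    integral_Ioo_left (by linarith) (by linarith) (by linarith) (Or.inl (by linarith)),
    integral_Ioo_right (by linarith) le_rfl (by linarith) (Or.inl (by linarith)),
    show d - 0 = d by ring, show d + 1/2 - d = 1/2 by ring, sub_self d]
  rw [Real.zero_rpow (by linarith : (1:ℝ) - α ≠ 0)]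
  ring

lemma riesz_top {α d : ℝ} (hα : 0 < α) (hα1 : α < 1) (hd : 1/2 < d) :
    rieszPot1 α (Eset d) (d + 1/2)
      = ((1/2 : ℝ) ^ (1 - α) + (d + 1/2) ^ (1 - α) - d ^ (1 - α)) / (1 - α) := by
  rw [riesz_split hα hα1 hd (d + 1/2)
      (integrableOn_Ioo_left (by linarith) (by linarith) (Or.inl (by linarith)))
      (integrableOn_Ioo_left (by linarith) le_rfl (Or.inl (by linarith))),
    integral_Ioo_left (by linarith) (by linarith) (by linarith) (Or.inl (by linarith)),
    integral_Ioo_left (by linarith) le_rfl (by linarith) (Or.inl (by linarith)),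
    show d + 1/2 - 0 = d + 1/2 by ring, show d + 1/2 - 1/2 = d by ring,
    show d + 1/2 - d = 1/2 by ring, sub_self (d + 1/2)]
  rw [Real.zero_rpow (by linarith : (1:ℝ) - α ≠ 0)]
  ring

lemma not_mem_uIcc_of_pos {a b : ℝ} (ha : 0 < a) (hb : 0 < b) : (0:ℝ) ∉ Set.uIcc a b := by
  rw [Set.mem_uIcc]
  rintro (⟨h, -⟩ | ⟨h, -⟩) <;> linarith

lemma ii_rpow {e a b : ℝ} (ha : 0 < a) (hb : 0 < b) :
    IntervalIntegrable (fun v : ℝ => v ^ e) volume a b :=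
  intervalIntegrable_rpow (Or.inr (not_mem_uIcc_of_pos ha hb))

lemma ii_rpow_shift {e a b : ℝ} (ha : 0 < a + 1/2) (hb : 0 < b + 1/2) :
    IntervalIntegrable (fun v : ℝ => (v + 1/2) ^ e) volume a b := by
  have := (ii_rpow ha hb (e := e)).comp_add_right (1/2)
  simpa using this

/-- one-step mean value bounds for `a^e - (a+1/2)^e`, `e < 0`. -/
lemma C1_upper {e a : ℝ} (he : e < 0) (ha : 0 < a) :
    a ^ e - (a + 1/2) ^ e ≤ 1/2 * (-e) * a ^ (e - 1) := by
  have he0 : e ≠ 0 := ne_of_lt he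
  have hI : ∫ v in a..(a + 1/2), v ^ (e - 1) = ((a + 1/2) ^ e - a ^ e) / e := by
    rw [integral_rpow (r := e - 1) (Or.inr ⟨by intro h; exact absurd h (by intro hh; nlinarith [hh]), not_mem_uIcc_of_pos ha (by linarith)⟩)]
    rw [show e - 1 + 1 = e by ring]
  have hb : ∫ v in a..(a + 1/2), v ^ (e - 1) ≤ ∫ _ in a..(a + 1/2), a ^ (e - 1) := by
    refine integral_mono_on (by linarith)
      (intervalIntegrable_rpow (Or.inr (not_mem_uIcc_of_pos ha (by linarith))))
      intervalIntegrable_const (fun v hv => ?_)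
    exact Real.rpow_le_rpow_of_nonpos ha hv.1 (by linarith)
  rw [intervalIntegral.integral_const, smul_eq_mul] at hb
  rw [hI] at hb
  have := mul_le_mul_of_nonneg_left hb (by linarith : 0 ≤ -e)
  calc a ^ e - (a + 1/2) ^ e = -e * (((a + 1/2) ^ e - a ^ e) / e) := by
        field_simp
        ring
      _ ≤ -e * ((a + 1/2 - a) * a ^ (e - 1)) := this
      _ = 1/2 * (-e) * a ^ (e - 1) := by ring

lemma C1_lower {e a : ℝ} (he : e < 0) (ha : 0 < a) :
    1/2 * (-e) * (a + 1/2) ^ (e - 1) ≤ a ^ e - (a + 1/2) ^ e := by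
  have he0 : e ≠ 0 := ne_of_lt he
  have hI : ∫ v in a..(a + 1/2), v ^ (e - 1) = ((a + 1/2) ^ e - a ^ e) / e := by
    rw [integral_rpow (r := e - 1) (Or.inr ⟨by intro h; exact absurd h (by intro hh; nlinarith [hh]), not_mem_uIcc_of_pos ha (by linarith)⟩)]
    rw [show e - 1 + 1 = e by ring]
  have hb : ∫ _ in a..(a + 1/2), (a + 1/2) ^ (e - 1) ≤ ∫ v in a..(a + 1/2), v ^ (e - 1) := by
    refine integral_mono_on (by linarith) intervalIntegrable_const
      (intervalIntegrable_rpow (Or.inr (not_mem_uIcc_of_pos ha (by linarith))))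
      (fun v hv => ?_)
    exact Real.rpow_le_rpow_of_nonpos (by linarith [hv.1]) hv.2 (by linarith)
  rw [intervalIntegral.integral_const, smul_eq_mul] at hb
  rw [hI] at hb
  have := mul_le_mul_of_nonneg_left hb (by linarith : 0 ≤ -e)
  calc 1/2 * (-e) * (a + 1/2) ^ (e - 1) = -e * ((a + 1/2 - a) * (a + 1/2) ^ (e - 1)) := by ring
      _ ≤ -e * (((a + 1/2) ^ e - a ^ e) / e) := this
      _ = a ^ e - (a + 1/2) ^ e := by field_simp; ring

lemma mid_eq {e d : ℝ} (he1 : e ≠ -1) (hd : 1/2 < d) :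
    ∫ v in (d - 1/2)..d, (v ^ e - (v + 1/2) ^ e)
      = (2 * d ^ (e + 1) - (d - 1/2) ^ (e + 1) - (d + 1/2) ^ (e + 1)) / (e + 1) := by
  rw [integral_sub (ii_rpow (by linarith) (by linarith))
      (ii_rpow_shift (by linarith) (by linarith))]
  have h2 : ∫ v in (d - 1/2)..d, (v + 1/2) ^ e = ∫ v in d..(d + 1/2), v ^ e := by
    rw [integral_comp_add_right (fun v => v ^ e) (1/2), show d - 1/2 + 1/2 = d by ring]
  rw [h2, integral_rpow (r := e) (a := d - 1/2) (b := d)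
      (Or.inr ⟨he1, not_mem_uIcc_of_pos (by linarith) (by linarith)⟩),
    integral_rpow (r := e) (a := d) (b := d + 1/2)
      (Or.inr ⟨he1, not_mem_uIcc_of_pos (by linarith) (by linarith)⟩)]
  ring

lemma mid_lower {e d : ℝ} (he : e < 0) (hd : 1/2 < d) :
    1/4 * (-e) * (d + 1/2) ^ (e - 1) ≤ ∫ v in (d - 1/2)..d, (v ^ e - (v + 1/2) ^ e) := by
  have hb : ∫ _ in (d - 1/2)..d, (1/2 * (-e) * (d + 1/2) ^ (e - 1))
      ≤ ∫ v in (d - 1/2)..d, (v ^ e - (v + 1/2) ^ e) := by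
    refine integral_mono_on (by linarith) intervalIntegrable_const
      ((ii_rpow (by linarith) (by linarith)).sub (ii_rpow_shift (by linarith) (by linarith)))
      (fun v hv => ?_)
    have h1 := C1_lower he (by linarith [hv.1] : (0:ℝ) < v)
    refine le_trans ?_ h1
    have : (d + 1/2) ^ (e - 1) ≤ (v + 1/2) ^ (e - 1) :=
      Real.rpow_le_rpow_of_nonpos (by linarith [hv.1]) (by linarith [hv.2]) (by linarith)
    nlinarith [this, he]
  rw [intervalIntegral.integral_const, smul_eq_mul] at hb
  calc 1/4 * (-e) * (d + 1/2) ^ (e - 1)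
      = (d - (d - 1/2)) * (1/2 * (-e) * (d + 1/2) ^ (e - 1)) := by ring
    _ ≤ _ := hb

lemma mid_upper {e d : ℝ} (he : e < 0) (hd : 1/2 < d) :
    ∫ v in (d - 1/2)..d, (v ^ e - (v + 1/2) ^ e) ≤ 1/4 * (-e) * (d - 1/2) ^ (e - 1) := by
  have hb : ∫ v in (d - 1/2)..d, (v ^ e - (v + 1/2) ^ e)
      ≤ ∫ _ in (d - 1/2)..d, (1/2 * (-e) * (d - 1/2) ^ (e - 1)) := by
    refine integral_mono_on (by linarith)
      ((ii_rpow (by linarith) (by linarith)).sub (ii_rpow_shift (by linarith) (by linarith)))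
      intervalIntegrable_const (fun v hv => ?_)
    have h1 := C1_upper he (by linarith [hv.1] : (0:ℝ) < v)
    refine le_trans h1 ?_
    have : v ^ (e - 1) ≤ (d - 1/2) ^ (e - 1) :=
      Real.rpow_le_rpow_of_nonpos (by linarith) hv.1 (by linarith)
    nlinarith [this, he]
  rw [intervalIntegral.integral_const, smul_eq_mul] at hb
  calc (∫ v in (d - 1/2)..d, (v ^ e - (v + 1/2) ^ e))
      ≤ (d - (d - 1/2)) * (1/2 * (-e) * (d - 1/2) ^ (e - 1)) := hb
    _ = 1/4 * (-e) * (d - 1/2) ^ (e - 1) := by ring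

/-- lower bound for X := (d-1/2)^(-s) + (d+1/2)^(-s) - 2d^(-s) -/
lemma X_lower {s d : ℝ} (hs : 0 < s) (hd : 1/2 < d) :
    s * (1 + s) / 4 * (d + 1/2) ^ (-s - 2)
      ≤ (d - 1/2) ^ (-s) + (d + 1/2) ^ (-s) - 2 * d ^ (-s) := by
  have h := mid_lower (e := -s - 1) (d := d) (by linarith) hd
  rw [mid_eq (e := -s - 1) (d := d) (by intro hh; nlinarith [hh]) hd] at h
  rw [show -s - 1 + 1 = -s by ring, show -s - 1 - 1 = -s - 2 by ring,
    show -(-s - 1) = 1 + s by ring] at h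
  have h2 := mul_le_mul_of_nonneg_left h hs.le
  have hs0 : s ≠ 0 := hs.ne'
  calc s * (1 + s) / 4 * (d + 1/2) ^ (-s - 2)
      = s * (1/4 * (1 + s) * (d + 1/2) ^ (-s - 2)) := by ring
    _ ≤ s * ((2 * d ^ (-s) - (d - 1/2) ^ (-s) - (d + 1/2) ^ (-s)) / (-s)) := h2
    _ = (d - 1/2) ^ (-s) + (d + 1/2) ^ (-s) - 2 * d ^ (-s) := by
        simp only [div_neg]
        field_simp
        ring

lemma X_upper {s d : ℝ} (hs : 0 < s) (hd : 1/2 < d) :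
    (d - 1/2) ^ (-s) + (d + 1/2) ^ (-s) - 2 * d ^ (-s)
      ≤ s * (1 + s) / 4 * (d - 1/2) ^ (-s - 2) := by
  have h := mid_upper (e := -s - 1) (d := d) (by linarith) hd
  rw [mid_eq (e := -s - 1) (d := d) (by intro hh; nlinarith [hh]) hd] at h
  rw [show -s - 1 + 1 = -s by ring, show -s - 1 - 1 = -s - 2 by ring,
    show -(-s - 1) = 1 + s by ring] at h
  have h2 := mul_le_mul_of_nonneg_left h hs.le
  have hs0 : s ≠ 0 := hs.ne'
  calc (d - 1/2) ^ (-s) + (d + 1/2) ^ (-s) - 2 * d ^ (-s)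
      = s * ((2 * d ^ (-s) - (d - 1/2) ^ (-s) - (d + 1/2) ^ (-s)) / (-s)) := by
        simp only [div_neg]
        field_simp
        ring
    _ ≤ s * (1/4 * (1 + s) * (d - 1/2) ^ (-s - 2)) := h2
    _ = s * (1 + s) / 4 * (d - 1/2) ^ (-s - 2) := by ring

/-- bounds for Y := 2d^(1-α) - (d-1/2)^(1-α) - (d+1/2)^(1-α) -/
lemma Y_lower {α d : ℝ} (hα : 0 < α) (hα1 : α < 1) (hd : 1/2 < d) :
    (1 - α) * α / 4 * (d + 1/2) ^ (-α - 1)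
      ≤ 2 * d ^ (1 - α) - (d - 1/2) ^ (1 - α) - (d + 1/2) ^ (1 - α) := by
  have h := mid_lower (e := -α) (d := d) (by linarith) hd
  rw [mid_eq (e := -α) (d := d) (by intro hh; nlinarith [hh]) hd] at h
  rw [show -α + 1 = 1 - α by ring, show -α - 1 = -α - 1 by ring, neg_neg] at h
  have h2 := mul_le_mul_of_nonneg_left h (by linarith : (0:ℝ) ≤ 1 - α)
  have hα0 : (1:ℝ) - α ≠ 0 := by intro hh; nlinarith [hh]
  calc (1 - α) * α / 4 * (d + 1/2) ^ (-α - 1)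
      = (1 - α) * (1/4 * α * (d + 1/2) ^ (-α - 1)) := by ring
    _ ≤ (1 - α) * ((2 * d ^ (1 - α) - (d - 1/2) ^ (1 - α) - (d + 1/2) ^ (1 - α)) / (1 - α)) := h2
    _ = 2 * d ^ (1 - α) - (d - 1/2) ^ (1 - α) - (d + 1/2) ^ (1 - α) := by
        field_simp

lemma Y_upper {α d : ℝ} (hα : 0 < α) (hα1 : α < 1) (hd : 1/2 < d) :
    2 * d ^ (1 - α) - (d - 1/2) ^ (1 - α) - (d + 1/2) ^ (1 - α)
      ≤ (1 - α) * α / 4 * (d - 1/2) ^ (-α - 1) := by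
  have h := mid_upper (e := -α) (d := d) (by linarith) hd
  rw [mid_eq (e := -α) (d := d) (by intro hh; nlinarith [hh]) hd] at h
  rw [show -α + 1 = 1 - α by ring, neg_neg] at h
  have h2 := mul_le_mul_of_nonneg_left h (by linarith : (0:ℝ) ≤ 1 - α)
  have hα0 : (1:ℝ) - α ≠ 0 := by intro hh; nlinarith [hh]
  calc 2 * d ^ (1 - α) - (d - 1/2) ^ (1 - α) - (d + 1/2) ^ (1 - α)
      = (1 - α) * ((2 * d ^ (1 - α) - (d - 1/2) ^ (1 - α) - (d + 1/2) ^ (1 - α)) / (1 - α)) := by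
        field_simp
    _ ≤ (1 - α) * (1/4 * α * (d - 1/2) ^ (-α - 1)) := h2
    _ = (1 - α) * α / 4 * (d - 1/2) ^ (-α - 1) := by ring

lemma rpow_three (x : ℝ) (hx : 0 ≤ x) : x ^ (3:ℝ) = x * x * x := by
  rw [show (3:ℝ) = ((3:ℕ):ℝ) by norm_num, Real.rpow_natCast]; ring

lemma rpow_two (x : ℝ) (hx : 0 ≤ x) : x ^ (2:ℝ) = x * x := by
  rw [show (2:ℝ) = ((2:ℕ):ℝ) by norm_num, Real.rpow_natCast]; ring

lemma ineq_neg {s α d : ℝ} (hs : 0 < s) (hs1 : s < 1) (hα : 0 < α) (hα1 : α < 1)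
    (hd : 5 ≤ d) :
    (d + 1/2) ^ ((2:ℝ) + s) < 2 * (d ^ (1 + s - α) * (d - 1/2) ^ ((1:ℝ) + α)) := by
  have hd0 : (0:ℝ) < d := by linarith
  have hds : (0:ℝ) < d ^ ((2:ℝ) + s) := Real.rpow_pos_of_pos hd0 _
  -- R bound
  have h2 : (d + 1/2) ^ ((2:ℝ) + s) ≤ (11/10 * d) ^ ((2:ℝ) + s) :=
    Real.rpow_le_rpow (by linarith) (by linarith) (by linarith)
  have h3 : ((11:ℝ)/10 * d) ^ ((2:ℝ) + s) = (11/10 : ℝ) ^ ((2:ℝ) + s) * d ^ ((2:ℝ) + s) :=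
    Real.mul_rpow (by norm_num) hd0.le
  have h4 : ((11:ℝ)/10) ^ ((2:ℝ) + s) ≤ (11/10 : ℝ) ^ (3:ℝ) :=
    Real.rpow_le_rpow_of_exponent_le (by norm_num) (by linarith)
  have h5 : ((11:ℝ)/10) ^ (3:ℝ) = 1331/1000 := by rw [rpow_three _ (by norm_num)]; norm_num
  have hR : (d + 1/2) ^ ((2:ℝ) + s) ≤ 1331/1000 * d ^ ((2:ℝ) + s) := by
    calc (d + 1/2) ^ ((2:ℝ) + s) ≤ (11/10 * d) ^ ((2:ℝ) + s) := h2
      _ = (11/10 : ℝ) ^ ((2:ℝ) + s) * d ^ ((2:ℝ) + s) := h3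
      _ ≤ 1331/1000 * d ^ ((2:ℝ) + s) := by
          apply mul_le_mul_of_nonneg_right _ hds.le
          rw [← h5]; exact h4
  -- Q bound
  have q9 : ((9:ℝ)/10) ^ ((2:ℝ)) ≤ (9/10 : ℝ) ^ ((1:ℝ) + α) :=
    Real.rpow_le_rpow_of_exponent_ge (by norm_num) (by norm_num) (by linarith)
  have q10 : ((9:ℝ)/10) ^ (2:ℝ) = 81/100 := by rw [rpow_two _ (by norm_num)]; norm_num
  have hda : (0:ℝ) ≤ d ^ ((1:ℝ) + α) := (Real.rpow_pos_of_pos hd0 _).le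
  have hQ : 81/100 * d ^ ((1:ℝ) + α) ≤ (d - 1/2) ^ ((1:ℝ) + α) := by
    calc 81/100 * d ^ ((1:ℝ) + α) = (9/10 : ℝ) ^ (2:ℝ) * d ^ ((1:ℝ) + α) := by rw [q10]
      _ ≤ (9/10 : ℝ) ^ ((1:ℝ) + α) * d ^ ((1:ℝ) + α) := mul_le_mul_of_nonneg_right q9 hda
      _ = ((9:ℝ)/10 * d) ^ ((1:ℝ) + α) := (Real.mul_rpow (by norm_num) hd0.le).symm
      _ ≤ (d - 1/2) ^ ((1:ℝ) + α) :=
          Real.rpow_le_rpow (by linarith) (by linarith) (by linarith)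
  have hP : (0:ℝ) < d ^ (1 + s - α) := Real.rpow_pos_of_pos hd0 _
  have hPd : d ^ (1 + s - α) * d ^ ((1:ℝ) + α) = d ^ ((2:ℝ) + s) := by
    rw [← Real.rpow_add hd0, show 1 + s - α + (1 + α) = 2 + s by ring]
  have hPQ : 81/100 * d ^ ((2:ℝ) + s) ≤ d ^ (1 + s - α) * (d - 1/2) ^ ((1:ℝ) + α) := by
    calc 81/100 * d ^ ((2:ℝ) + s) = d ^ (1 + s - α) * (81/100 * d ^ ((1:ℝ) + α)) := by
          rw [← hPd]; ring
      _ ≤ d ^ (1 + s - α) * (d - 1/2) ^ ((1:ℝ) + α) := mul_le_mul_of_nonneg_left hQ hP.le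
  linarith

lemma ineq_pos {s α d : ℝ} (hs : 0 < s) (hs1 : s < 1) (hα : 0 < α) (hα1 : α < 1)
    (hd : 5 ≤ d) :
    d ^ (1 + s - α) * (d + 1/2) ^ ((1:ℝ) + α) < 3 * (d - 1/2) ^ ((2:ℝ) + s) := by
  have hd0 : (0:ℝ) < d := by linarith
  have hds : (0:ℝ) < d ^ ((2:ℝ) + s) := Real.rpow_pos_of_pos hd0 _
  have hP : (0:ℝ) < d ^ (1 + s - α) := Real.rpow_pos_of_pos hd0 _
  have hPd : d ^ (1 + s - α) * d ^ ((1:ℝ) + α) = d ^ ((2:ℝ) + s) := by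
    rw [← Real.rpow_add hd0, show 1 + s - α + (1 + α) = 2 + s by ring]
  -- LHS bound
  have h4 : ((11:ℝ)/10) ^ ((1:ℝ) + α) ≤ (11/10 : ℝ) ^ (2:ℝ) :=
    Real.rpow_le_rpow_of_exponent_le (by norm_num) (by linarith)
  have h5 : ((11:ℝ)/10) ^ (2:ℝ) = 121/100 := by rw [rpow_two _ (by norm_num)]; norm_num
  have hda : (0:ℝ) ≤ d ^ ((1:ℝ) + α) := (Real.rpow_pos_of_pos hd0 _).le
  have hQ' : (d + 1/2) ^ ((1:ℝ) + α) ≤ 121/100 * d ^ ((1:ℝ) + α) := by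
    calc (d + 1/2) ^ ((1:ℝ) + α) ≤ ((11:ℝ)/10 * d) ^ ((1:ℝ) + α) :=
          Real.rpow_le_rpow (by linarith) (by linarith) (by linarith)
      _ = (11/10 : ℝ) ^ ((1:ℝ) + α) * d ^ ((1:ℝ) + α) := Real.mul_rpow (by norm_num) hd0.le
      _ ≤ 121/100 * d ^ ((1:ℝ) + α) := by
          apply mul_le_mul_of_nonneg_right _ hda
          rw [← h5]; exact h4
  have hL : d ^ (1 + s - α) * (d + 1/2) ^ ((1:ℝ) + α) ≤ 121/100 * d ^ ((2:ℝ) + s) := by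
    calc d ^ (1 + s - α) * (d + 1/2) ^ ((1:ℝ) + α)
        ≤ d ^ (1 + s - α) * (121/100 * d ^ ((1:ℝ) + α)) := mul_le_mul_of_nonneg_left hQ' hP.le
      _ = 121/100 * d ^ ((2:ℝ) + s) := by rw [← hPd]; ring
  -- RHS bound
  have q9 : ((9:ℝ)/10) ^ (3:ℝ) ≤ (9/10 : ℝ) ^ ((2:ℝ) + s) :=
    Real.rpow_le_rpow_of_exponent_ge (by norm_num) (by norm_num) (by linarith)
  have q10 : ((9:ℝ)/10) ^ (3:ℝ) = 729/1000 := by rw [rpow_three _ (by norm_num)]; norm_num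
  have hR : 729/1000 * d ^ ((2:ℝ) + s) ≤ (d - 1/2) ^ ((2:ℝ) + s) := by
    calc 729/1000 * d ^ ((2:ℝ) + s) = (9/10 : ℝ) ^ (3:ℝ) * d ^ ((2:ℝ) + s) := by rw [q10]
      _ ≤ (9/10 : ℝ) ^ ((2:ℝ) + s) * d ^ ((2:ℝ) + s) := mul_le_mul_of_nonneg_right q9 hds.le
      _ = ((9:ℝ)/10 * d) ^ ((2:ℝ) + s) := (Real.mul_rpow (by norm_num) hd0.le).symm
      _ ≤ (d - 1/2) ^ ((2:ℝ) + s) :=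
          Real.rpow_le_rpow (by linarith) (by linarith) (by linarith)
  linarith

lemma f_neg_at {s α c ε d : ℝ} (hs : 0 < s) (hs1 : s < 1) (hα : 0 < α) (hα1 : α < 1)
    (hc : 0 < c) (hε : 0 < ε) (hd : 5 ≤ d)
    (hK : c * α * ε * d ^ (1 + s - α) ≤ 1 + s) :
    fEL s α c ε d < 0 := by
  have hd12 : (1:ℝ)/2 < d := by linarith
  have hd0 : (0:ℝ) < d := by linarith
  have hs0 : s ≠ 0 := hs.ne'
  have hα0 : (1:ℝ) - α ≠ 0 := by intro hh; nlinarith [hh]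
  have hX := X_lower hs hd12
  have hY := Y_upper hα hα1 hd12
  -- t1
  have t1 : (1 + s)/2 * (d + 1/2) ^ (-s - 2)
      ≤ (2/s) * ((d - 1/2) ^ (-s) + (d + 1/2) ^ (-s) - 2 * d ^ (-s)) := by
    have := mul_le_mul_of_nonneg_left hX (by positivity : (0:ℝ) ≤ 2/s)
    calc (1 + s)/2 * (d + 1/2) ^ (-s - 2)
        = (2/s) * (s * (1 + s) / 4 * (d + 1/2) ^ (-s - 2)) := by field_simp; ring
      _ ≤ _ := this
  -- t2
  have t2 : (c * ε/(1 - α)) * (2 * d ^ (1 - α) - (d - 1/2) ^ (1 - α) - (d + 1/2) ^ (1 - α))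
      ≤ c * ε * α / 4 * (d - 1/2) ^ (-α - 1) := by
    have hpos : (0:ℝ) ≤ c * ε / (1 - α) := by
      apply div_nonneg (by positivity); linarith
    have := mul_le_mul_of_nonneg_left hY hpos
    calc (c * ε/(1 - α)) * (2 * d ^ (1 - α) - (d - 1/2) ^ (1 - α) - (d + 1/2) ^ (1 - α))
        ≤ (c * ε/(1 - α)) * ((1 - α) * α / 4 * (d - 1/2) ^ (-α - 1)) := this
      _ = c * ε * α / 4 * (d - 1/2) ^ (-α - 1) := by field_simp
  -- t3
  have t3 : c * ε * α / 4 * (d - 1/2) ^ (-α - 1) < (1 + s)/2 * (d + 1/2) ^ (-s - 2) := by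
    have hQ : (0:ℝ) < (d - 1/2) ^ ((1:ℝ) + α) := Real.rpow_pos_of_pos (by linarith) _
    have hR : (0:ℝ) < (d + 1/2) ^ ((2:ℝ) + s) := Real.rpow_pos_of_pos (by linarith) _
    have hP : (0:ℝ) < d ^ (1 + s - α) := Real.rpow_pos_of_pos hd0 _
    have e1 : (d - 1/2) ^ (-α - 1) = ((d - 1/2) ^ ((1:ℝ) + α))⁻¹ := by
      rw [show -α - 1 = -(1 + α) by ring, Real.rpow_neg (by linarith)]
    have e2 : (d + 1/2) ^ (-s - 2) = ((d + 1/2) ^ ((2:ℝ) + s))⁻¹ := by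
      rw [show -s - 2 = -(2 + s) by ring, Real.rpow_neg (by linarith)]
    rw [e1, e2]
    rw [show c * ε * α / 4 * ((d - 1/2) ^ ((1:ℝ) + α))⁻¹
        = (c * ε * α) / (4 * (d - 1/2) ^ ((1:ℝ) + α)) by field_simp,
      show (1 + s)/2 * ((d + 1/2) ^ ((2:ℝ) + s))⁻¹
        = (1 + s) / (2 * (d + 1/2) ^ ((2:ℝ) + s)) by field_simp]
    rw [div_lt_div_iff₀ (by positivity) (by positivity)]
    have hRPQ := ineq_neg hs hs1 hα hα1 hd
    have hK0 : (0:ℝ) < c * α * ε := by positivity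
    have f1 : (c * α * ε) * ((d + 1/2) ^ ((2:ℝ) + s))
        < (c * α * ε) * (2 * (d ^ (1 + s - α) * (d - 1/2) ^ ((1:ℝ) + α))) :=
      mul_lt_mul_of_pos_left hRPQ hK0
    have f2 : (c * α * ε * d ^ (1 + s - α)) * (2 * (d - 1/2) ^ ((1:ℝ) + α))
        ≤ (1 + s) * (2 * (d - 1/2) ^ ((1:ℝ) + α)) :=
      mul_le_mul_of_nonneg_right hK (by positivity)
    nlinarith [f1, f2]
  have hfel : fEL s α c ε d
      = -((2/s) * ((d - 1/2) ^ (-s) + (d + 1/2) ^ (-s) - 2 * d ^ (-s)))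
        + (c * ε/(1 - α)) * (2 * d ^ (1 - α) - (d - 1/2) ^ (1 - α) - (d + 1/2) ^ (1 - α)) := by
    unfold fEL; ring
  linarith

lemma f_pos_at {s α c ε d : ℝ} (hs : 0 < s) (hs1 : s < 1) (hα : 0 < α) (hα1 : α < 1)
    (hc : 0 < c) (hε : 0 < ε) (hd : 5 ≤ d)
    (hK : 6 * (1 + s) ≤ c * α * ε * d ^ (1 + s - α)) :
    0 < fEL s α c ε d := by
  have hd12 : (1:ℝ)/2 < d := by linarith
  have hd0 : (0:ℝ) < d := by linarith
  have hs0 : s ≠ 0 := hs.ne'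
  have hα0 : (1:ℝ) - α ≠ 0 := by intro hh; nlinarith [hh]
  have hX := X_upper hs hd12
  have hY := Y_lower hα hα1 hd12
  have t1 : (2/s) * ((d - 1/2) ^ (-s) + (d + 1/2) ^ (-s) - 2 * d ^ (-s))
      ≤ (1 + s)/2 * (d - 1/2) ^ (-s - 2) := by
    have := mul_le_mul_of_nonneg_left hX (by positivity : (0:ℝ) ≤ 2/s)
    calc (2/s) * ((d - 1/2) ^ (-s) + (d + 1/2) ^ (-s) - 2 * d ^ (-s))
        ≤ (2/s) * (s * (1 + s) / 4 * (d - 1/2) ^ (-s - 2)) := this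
      _ = (1 + s)/2 * (d - 1/2) ^ (-s - 2) := by field_simp; ring
  have t2 : c * ε * α / 4 * (d + 1/2) ^ (-α - 1)
      ≤ (c * ε/(1 - α)) * (2 * d ^ (1 - α) - (d - 1/2) ^ (1 - α) - (d + 1/2) ^ (1 - α)) := by
    have hpos : (0:ℝ) ≤ c * ε / (1 - α) := by
      apply div_nonneg (by positivity); linarith
    have := mul_le_mul_of_nonneg_left hY hpos
    calc c * ε * α / 4 * (d + 1/2) ^ (-α - 1)
        = (c * ε/(1 - α)) * ((1 - α) * α / 4 * (d + 1/2) ^ (-α - 1)) := by field_simp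
      _ ≤ _ := this
  have t3 : (1 + s)/2 * (d - 1/2) ^ (-s - 2) < c * ε * α / 4 * (d + 1/2) ^ (-α - 1) := by
    have hQ : (0:ℝ) < (d + 1/2) ^ ((1:ℝ) + α) := Real.rpow_pos_of_pos (by linarith) _
    have hR : (0:ℝ) < (d - 1/2) ^ ((2:ℝ) + s) := Real.rpow_pos_of_pos (by linarith) _
    have hP : (0:ℝ) < d ^ (1 + s - α) := Real.rpow_pos_of_pos hd0 _
    have e1 : (d + 1/2) ^ (-α - 1) = ((d + 1/2) ^ ((1:ℝ) + α))⁻¹ := by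
      rw [show -α - 1 = -(1 + α) by ring, Real.rpow_neg (by linarith)]
    have e2 : (d - 1/2) ^ (-s - 2) = ((d - 1/2) ^ ((2:ℝ) + s))⁻¹ := by
      rw [show -s - 2 = -(2 + s) by ring, Real.rpow_neg (by linarith)]
    rw [e1, e2]
    rw [show c * ε * α / 4 * ((d + 1/2) ^ ((1:ℝ) + α))⁻¹
        = (c * ε * α) / (4 * (d + 1/2) ^ ((1:ℝ) + α)) by field_simp,
      show (1 + s)/2 * ((d - 1/2) ^ ((2:ℝ) + s))⁻¹
        = (1 + s) / (2 * (d - 1/2) ^ ((2:ℝ) + s)) by field_simp]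
    rw [div_lt_div_iff₀ (by positivity) (by positivity)]
    have hRPQ := ineq_pos hs hs1 hα hα1 hd
    have hK0 : (0:ℝ) < c * α * ε := by positivity
    have f1 : (c * α * ε) * (d ^ (1 + s - α) * (d + 1/2) ^ ((1:ℝ) + α))
        < (c * α * ε) * (3 * (d - 1/2) ^ ((2:ℝ) + s)) :=
      mul_lt_mul_of_pos_left hRPQ hK0
    have f2 : (6 * (1 + s)) * ((d + 1/2) ^ ((1:ℝ) + α))
        ≤ (c * α * ε * d ^ (1 + s - α)) * ((d + 1/2) ^ ((1:ℝ) + α)) :=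
      mul_le_mul_of_nonneg_right hK (by positivity)
    nlinarith [f1, f2]
  have hfel : fEL s α c ε d
      = -((2/s) * ((d - 1/2) ^ (-s) + (d + 1/2) ^ (-s) - 2 * d ^ (-s)))
        + (c * ε/(1 - α)) * (2 * d ^ (1 - α) - (d - 1/2) ^ (1 - α) - (d + 1/2) ^ (1 - α)) := by
    unfold fEL; ring
  linarith

lemma contOn_rpow_comp {g : ℝ → ℝ} (hg : Continuous g) (e : ℝ) {S : Set ℝ}
    (h : ∀ x ∈ S, g x ≠ 0) : ContinuousOn (fun d => g d ^ e) S := fun x hx =>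
  ((Real.continuousAt_rpow_const _ _ (Or.inl (h x hx))).comp hg.continuousAt).continuousWithinAt

lemma fEL_contOn {s α c ε A B : ℝ} (hA : 1/2 < A) :
    ContinuousOn (fun d => fEL s α c ε d) (Icc A B) := by
  have h0 : ∀ x ∈ Icc A B, x ≠ 0 := fun x hx => by
    have := hx.1; intro hh; rw [hh] at this; linarith
  have h1 : ∀ x ∈ Icc A B, x - 1/2 ≠ 0 := fun x hx => by
    have := hx.1; intro hh; nlinarith [hh]
  have h2 : ∀ x ∈ Icc A B, x + 1/2 ≠ 0 := fun x hx => by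
    have := hx.1; intro hh; nlinarith [hh]
  unfold fEL
  apply ContinuousOn.add
  · apply continuousOn_const.mul
    apply ContinuousOn.sub
    apply ContinuousOn.sub
    · exact continuousOn_const.mul (contOn_rpow_comp continuous_id (-s) h0)
    · exact contOn_rpow_comp (by continuity) (-s) h1
    · exact contOn_rpow_comp (by continuity) (-s) h2
  · apply continuousOn_const.mul
    apply ContinuousOn.sub
    apply ContinuousOn.sub
    · exact continuousOn_const.mul (contOn_rpow_comp continuous_id (1-α) h0)
    · exact contOn_rpow_comp (by continuity) (1-α) h1
    · exact contOn_rpow_comp (by continuity) (1-α) h2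

end S16

open S16 in
/-- With `d_ε = ((1+s)/(cαε))^{1/(1+s-α)}`, for all sufficiently small
`ε > 0` there exists `d > d_ε` with `f(d) = 0`; consequently `E = (0,1/2) ∪ (d,d+1/2)`
satisfies `κ_E + cεV_E = λ` at all four boundary points, for some `λ ∈ ℝ`. -/
theorem stmt16 (s α c : ℝ) (hs : s ∈ Ioo (0 : ℝ) 1) (hα : α ∈ Ioo (0 : ℝ) 1) (hc : 0 < c) :
    ∃ εbar : ℝ, 0 < εbar ∧ ∀ ε ∈ Ioo (0 : ℝ) εbar,
      ∃ d : ℝ, ((1 + s) / (c * α * ε)) ^ (1 / (1 + s - α)) < d ∧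
        fEL s α c ε d = 0 ∧
        ∃ lam : ℝ, ∀ x ∈ ({0, 1 / 2, d, d + 1 / 2} : Set ℝ), ∃ κ : ℝ,
          IsFracMeanCurv1 s (Eset d) x κ ∧
          κ + c * ε * rieszPot1 α (Eset d) x = lam := by

  obtain ⟨hs0, hs1⟩ := hs
  obtain ⟨hα0, hα1⟩ := hα
  have hq : (0:ℝ) < 1 + s - α := by linarith
  have hq0 : (1:ℝ) + s - α ≠ 0 := hq.ne'
  refine ⟨(1 + s) / (25 * c * α), by positivity, ?_⟩
  rintro ε ⟨hε0, hεb⟩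
  have hca : (0:ℝ) < c * α * ε := by positivity
  set X : ℝ := (1 + s) / (c * α * ε) with hX
  have hX0 : 0 < X := by positivity
  have hX25 : 25 < X := by
    rw [hX, lt_div_iff₀ hca]
    rw [lt_div_iff₀ (by positivity : (0:ℝ) < 25 * c * α)] at hεb
    nlinarith [hεb]
  set dε : ℝ := X ^ (1 / (1 + s - α)) with hdε
  have hpow : ∀ z : ℝ, 0 < z → (z ^ (1 / (1 + s - α))) ^ (1 + s - α) = z := by
    intro z hz
    rw [← Real.rpow_mul hz.le, one_div_mul_cancel hq0, Real.rpow_one]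
  have h5q : ((5:ℝ) ^ (1 + s - α)) ^ (1 / (1 + s - α)) = 5 := by
    rw [← Real.rpow_mul (by norm_num : (0:ℝ) ≤ 5), mul_one_div_cancel hq0, Real.rpow_one]
  have hdε5 : 5 ≤ dε := by
    have h1 : (5:ℝ) ^ (1 + s - α) ≤ X := by
      have h2 : (5:ℝ) ^ (1 + s - α) ≤ (5:ℝ) ^ (2:ℝ) :=
        Real.rpow_le_rpow_of_exponent_le (by norm_num) (by linarith)
      have h3 : (5:ℝ) ^ (2:ℝ) = 25 := by
        rw [show (2:ℝ) = ((2:ℕ):ℝ) by norm_num, Real.rpow_natCast]; norm_num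
      linarith
    calc (5:ℝ) = ((5:ℝ) ^ (1 + s - α)) ^ (1 / (1 + s - α)) := h5q.symm
      _ ≤ X ^ (1 / (1 + s - α)) := Real.rpow_le_rpow (by positivity) h1 (by positivity)
  have hKε : c * α * ε * dε ^ (1 + s - α) = 1 + s := by
    rw [hdε, hpow X hX0, hX]
    field_simp
  set D : ℝ := (6 * X) ^ (1 / (1 + s - α)) with hD
  have hKD : c * α * ε * D ^ (1 + s - α) = 6 * (1 + s) := by
    rw [hD, hpow (6 * X) (by positivity), hX]
    field_simp
  have hdεD : dε < D := by
    rw [hdε, hD]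
    exact Real.rpow_lt_rpow hX0.le (by linarith) (by positivity)
  have hD5 : 5 ≤ D := le_trans hdε5 hdεD.le
  have hfneg : fEL s α c ε dε < 0 :=
    f_neg_at hs0 hs1 hα0 hα1 hc hε0 hdε5 (le_of_eq hKε)
  have hfpos : 0 < fEL s α c ε D :=
    f_pos_at hs0 hs1 hα0 hα1 hc hε0 hD5 (ge_of_eq hKD)
  have hsub := intermediate_value_Ioo hdεD.le (fEL_contOn (s := s) (α := α) (c := c) (ε := ε)
    (by linarith : (1:ℝ)/2 < dε))
  obtain ⟨d, hdmem, hd0⟩ := hsub (⟨hfneg, hfpos⟩ : (0:ℝ) ∈ Ioo (fEL s α c ε dε) (fEL s α c ε D))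
  have hd0' : fEL s α c ε d = 0 := hd0
  have hd12 : (1:ℝ)/2 < d := by linarith [hdmem.1, hdε5]
  refine ⟨d, hdmem.1, hd0', ?_⟩
  have hα0' : (1:ℝ) - α ≠ 0 := by intro hh; nlinarith [hh]
  have hs0' : s ≠ 0 := hs0.ne'
  set κ0 : ℝ := (2 / s) * ((1/2 : ℝ) ^ (-s) + (d + 1/2) ^ (-s) - d ^ (-s)) with hκ0
  set κ1 : ℝ := (2 / s) * ((1/2 : ℝ) ^ (-s) + d ^ (-s) - (d - 1/2) ^ (-s)) with hκ1
  set V0 : ℝ := ((1/2 : ℝ) ^ (1 - α) + (d + 1/2) ^ (1 - α) - d ^ (1 - α)) / (1 - α) with hV0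
  set V1 : ℝ := ((1/2 : ℝ) ^ (1 - α) + d ^ (1 - α) - (d - 1/2) ^ (1 - α)) / (1 - α) with hV1
  have hiden : (κ1 + c * ε * V1) - (κ0 + c * ε * V0) = fEL s α c ε d := by
    rw [hκ0, hκ1, hV0, hV1]
    unfold fEL
    field_simp
    ring
  have heq : κ1 + c * ε * V1 = κ0 + c * ε * V0 := by
    rw [hd0'] at hiden; linarith
  refine ⟨κ0 + c * ε * V0, ?_⟩
  rintro x hx
  simp only [mem_insert_iff, mem_singleton_iff] at hx
  rcases hx with rfl | rfl | rfl | rfl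
  · exact ⟨κ0, curv0 hs0 hd12, by rw [riesz0 hα0 hα1 hd12, ← hV0]⟩
  · exact ⟨κ1, curv_half hs0 hd12, by rw [riesz_half hα0 hα1 hd12, ← hV1]; exact heq⟩
  · exact ⟨κ1, curv_d hs0 hd12, by rw [riesz_d hα0 hα1 hd12, ← hV1]; exact heq⟩
  · exact ⟨κ0, curv_top hs0 hd12, by rw [riesz_top hα0 hα1 hd12, ← hV0]⟩
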